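/- Let G′ be a semi-Markovian causal graph with observed variables V′ and unobserved variables U′ such that there are no directed edges between observed variables and the bidirected edges of G′_{V′} form a spanning tree of V′; fix ε ∈ (0,1), fix V₁ ∈ V′, and let M₁ and M₂ be the SEMs in which every variable is binary, every unobserved variable is uniform on {0,1}, in M₁ every X ∈ V′ satisfies P^{M₁}(x | pa) = (1 − ε)·𝟙[x = ⊕pa] + ε/2, and in M₂ every X ∈ V′ ∖ {V₁} satisfies P^{M₂}(x | pa) = (1 − ε)·𝟙[x = ⊕pa] + ε/2 while P^{M₂}(v₁ | pa) = (1 − ε)·𝟙[v₁ = ¬(⊕pa)] + ε/2, where ⊕pa denotes the XOR of the parent values. Then for every strict subset A ⊊ V′ with |A| = n and every v ∈ dom(V′): Q^{M₁}[A](v) = Q^{M₂}[A](v) = 1/2ⁿ. -/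

import Mathlib

open scoped Classical

/-- A semi-Markovian causal graph: a DAG over a finite vertex set partitioned into
observed (`obs`) and unobserved (`unobs`) variables, where every unobserved variable
has no parents and exactly two (distinct, observed) children. -/
structure CausalGraph (ν : Type) [Fintype ν] [DecidableEq ν] where
  obs : Finset ν
  unobs : Finset ν
  disj : Disjoint obs unobs
  E : ν → ν → Prop
  edge_mem : ∀ x y, E x y → x ∈ obs ∪ unobs ∧ y ∈ obs ∪ unobs
  acyclic : ∀ x, ¬ Relation.TransGen E x x
  unobs_no_parent : ∀ u ∈ unobs, ∀ w, ¬ E w u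
  unobs_two_children : ∀ u ∈ unobs,
    ∃ a b, a ≠ b ∧ a ∈ obs ∧ b ∈ obs ∧ (∀ w, E u w ↔ w = a ∨ w = b)

namespace CausalGraph

variable {ν : Type} [Fintype ν] [DecidableEq ν]

def verts (G : CausalGraph ν) : Finset ν := G.obs ∪ G.unobs

/-- A structural equation model over the causal graph `G`: finite nonempty domains
(encoded as finite sets of naturals), a pmf for each unobserved variable, and a
conditional pmf (given an assignment to the parents) for each observed variable. -/
structure SEM (G : CausalGraph ν) where
  dom : ν → Finset ℕ
  dom_ne : ∀ x, (dom x).Nonempty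
  pU : ν → ℕ → ℝ
  pU_nonneg : ∀ u n, 0 ≤ pU u n
  pU_sum : ∀ u ∈ G.unobs, ∑ n ∈ dom u, pU u n = 1
  pO : ν → ℕ → (ν → ℕ) → ℝ
  pO_nonneg : ∀ x n pa, 0 ≤ pO x n pa
  pO_sum : ∀ x ∈ G.obs, ∀ pa : ν → ℕ, ∑ n ∈ dom x, pO x n pa = 1
  pO_par : ∀ x n (pa pa' : ν → ℕ), (∀ p, G.E p x → pa p = pa' p) → pO x n pa = pO x n pa'

namespace SEM

variable {G : CausalGraph ν}

/-- Full assignments: all variables of `G` get values in their domains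
(non-vertices are pinned to `0`). -/
noncomputable def fullAssign (M : SEM G) : Finset (ν → ℕ) :=
  Fintype.piFinset (fun x => if x ∈ G.verts then M.dom x else {0})

/-- Observed assignments `dom(V)`: observed variables get values in their domains
(all other coordinates are pinned to `0`). -/
noncomputable def obsAssign (M : SEM G) : Finset (ν → ℕ) :=
  Fintype.piFinset (fun x => if x ∈ G.obs then M.dom x else {0})

/-- `Q^M[S](v) = Σ_u Π_{X ∈ S} P(x | pa_G(X)) Π_{U} P(u)`. -/
noncomputable def Q (M : SEM G) (S : Finset ν) (v : ν → ℕ) : ℝ :=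
  ∑ w ∈ M.fullAssign.filter (fun w => ∀ x ∈ G.obs, w x = v x),
    (∏ x ∈ S, M.pO x (w x) w) * ∏ u ∈ G.unobs, M.pU u (w u)

/-- The observational distribution `P^M(v) = Q^M[V](v)`. -/
noncomputable def P (M : SEM G) (v : ν → ℕ) : ℝ := M.Q G.obs v

/-- Post-interventional probability `P^M_x(y)`: sum of `Q^M[V∖X]` over all observed
realizations consistent with `x` on `X` and `y` on `Y`. -/
noncomputable def Px (M : SEM G) (X : Finset ν) (x : ν → ℕ) (Y : Finset ν) (y : ν → ℕ) : ℝ :=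
  ∑ v ∈ M.obsAssign.filter (fun v => (∀ i ∈ X, v i = x i) ∧ (∀ i ∈ Y, v i = y i)),
    M.Q (G.obs \ X) v

/-- `M ∈ 𝕄⁺(G)`: strictly positive observational distribution. -/
def positive (M : SEM G) : Prop := ∀ v ∈ M.obsAssign, 0 < M.P v

end SEM

/-- The causal effect of `X` on `Y` is identifiable from `G`. -/
def Identifiable (G : CausalGraph ν) (X Y : Finset ν) : Prop :=
  ∀ M₁ M₂ : SEM G, M₁.positive → M₂.positive →
    (∀ i ∈ G.obs, M₁.dom i = M₂.dom i) →
    (∀ v ∈ M₁.obsAssign, M₁.P v = M₂.P v) →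
    ∀ x y : ν → ℕ, (∀ i ∈ X, x i ∈ M₁.dom i) → (∀ i ∈ Y, y i ∈ M₁.dom i) →
      M₁.Px X x Y y = M₂.Px X x Y y

/-- `Q[S]` is identifiable from `G`. -/
def QIdentifiable (G : CausalGraph ν) (S : Finset ν) : Prop :=
  Identifiable G (G.obs \ S) S

/-- The causal effect of `X` on `Y` is g-identifiable from `(𝔸, G)`. -/
def GIdentifiable (G : CausalGraph ν) (𝔸 : Finset (Finset ν)) (X Y : Finset ν) : Prop :=
  ∀ M₁ M₂ : SEM G, M₁.positive → M₂.positive →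
    (∀ i ∈ G.obs, M₁.dom i = M₂.dom i) →
    (∀ A ∈ 𝔸, ∀ v ∈ M₁.obsAssign, M₁.Q A v = M₂.Q A v) →
    ∀ x y : ν → ℕ, (∀ i ∈ X, x i ∈ M₁.dom i) → (∀ i ∈ Y, y i ∈ M₁.dom i) →
      M₁.Px X x Y y = M₂.Px X x Y y

/-- `Q[S]` is g-identifiable from `(𝔸, G)`. -/
def QGIdentifiable (G : CausalGraph ν) (𝔸 : Finset (Finset ν)) (S : Finset ν) : Prop :=
  GIdentifiable G 𝔸 (G.obs \ S) S

/-- Bidirected edge of `G_X` between `a` and `b`: distinct members of `X` sharing an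
unobserved parent (whose two children then necessarily both lie in `X`). -/
def biEdge (G : CausalGraph ν) (X : Finset ν) (a b : ν) : Prop :=
  a ≠ b ∧ a ∈ X ∧ b ∈ X ∧ ∃ u ∈ G.unobs, G.E u a ∧ G.E u b

/-- `X` is a single c-component of `G`. -/
def SingleC (G : CausalGraph ν) (X : Finset ν) : Prop :=
  X.Nonempty ∧ ∀ a ∈ X, ∀ b ∈ X, Relation.ReflTransGen (G.biEdge X) a b

/-- The c-components of `S`: connected components of the bidirected part of `G_S`. -/
noncomputable def cComponents (G : CausalGraph ν) (S : Finset ν) : Finset (Finset ν) :=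
  S.image (fun a => S.filter (fun b => Relation.ReflTransGen (G.biEdge S) a b))

/-- Directed edge of `G_X` (both endpoints in `X`). -/
def dirEdgeIn (G : CausalGraph ν) (X : Finset ν) (a b : ν) : Prop :=
  a ∈ X ∧ b ∈ X ∧ G.E a b

/-- `Anc_Y(G_X)`: members of `X` having a directed path in `G_X` to some member of `Y`. -/
noncomputable def ancIn (G : CausalGraph ν) (X Y : Finset ν) : Finset ν :=
  X.filter (fun a => ∃ y ∈ Y, Relation.ReflTransGen (G.dirEdgeIn X) a y)

/-- Unobserved vertices of the induced subgraph `G[A]`: unobserved vertices of `G`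
both of whose children lie in `A`. -/
noncomputable def inducedUnobs (G : CausalGraph ν) (A : Finset ν) : Finset ν :=
  G.unobs.filter (fun u => ∀ w, G.E u w → w ∈ A)

/-- The induced subgraph `G[A]`. -/
noncomputable def induced (G : CausalGraph ν) (A : Finset ν) : CausalGraph ν where
  obs := A ∩ G.obs
  unobs := G.inducedUnobs A
  disj := G.disj.mono Finset.inter_subset_right (Finset.filter_subset _ _)
  E x y := G.E x y ∧ x ∈ (A ∩ G.obs) ∪ G.inducedUnobs A ∧ y ∈ (A ∩ G.obs) ∪ G.inducedUnobs A
  edge_mem := fun x y h => ⟨h.2.1, h.2.2⟩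
  acyclic := fun x h => G.acyclic x (by
    have key : ∀ a b, Relation.TransGen (fun x y => G.E x y ∧ x ∈ (A ∩ G.obs) ∪ G.inducedUnobs A ∧
        y ∈ (A ∩ G.obs) ∪ G.inducedUnobs A) a b → Relation.TransGen G.E a b := by
      intro a b hab
      induction hab with
      | single hbc => exact Relation.TransGen.single hbc.1
      | tail _ hbc ih => exact Relation.TransGen.tail ih hbc.1
    exact key x x h)
  unobs_no_parent := fun u hu w hw =>
    G.unobs_no_parent u (Finset.mem_filter.mp hu).1 w hw.1
  unobs_two_children := by
    intro u hu
    have hu' := Finset.mem_filter.mp hu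
    obtain ⟨a, b, hab, ha, hb, hiff⟩ := G.unobs_two_children u hu'.1
    have hEa : G.E u a := (hiff a).mpr (Or.inl rfl)
    have hEb : G.E u b := (hiff b).mpr (Or.inr rfl)
    have haA : a ∈ A := hu'.2 a hEa
    have hbA : b ∈ A := hu'.2 b hEb
    refine ⟨a, b, hab, Finset.mem_inter.mpr ⟨haA, ha⟩, Finset.mem_inter.mpr ⟨hbA, hb⟩, ?_⟩
    intro w
    constructor
    · intro hw; exact (hiff w).mp hw.1
    · rintro (rfl | rfl)
      · exact ⟨hEa, Finset.mem_union.mpr (Or.inr hu),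
          Finset.mem_union.mpr (Or.inl (Finset.mem_inter.mpr ⟨haA, ha⟩))⟩
      · exact ⟨hEb, Finset.mem_union.mpr (Or.inr hu),
          Finset.mem_union.mpr (Or.inl (Finset.mem_inter.mpr ⟨hbA, hb⟩))⟩

/-- `H` is a subgraph of `G`. -/
def IsSubgraph (H G : CausalGraph ν) : Prop :=
  H.obs ⊆ G.obs ∧ H.unobs ⊆ G.unobs ∧ ∀ a b, H.E a b → G.E a b

/-- `H` is an `R`-rooted c-forest: `R` is the root set of `H`, the observed vertex set of
`H` is a single c-component, and every observed vertex has at most one child in `H`. -/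
def IsCForest (H : CausalGraph ν) (R : Finset ν) : Prop :=
  H.obs.filter (fun x => ∀ w, ¬ H.E x w) = R ∧
  H.SingleC H.obs ∧
  ∀ x ∈ H.obs, ∀ w w', H.E x w → H.E x w' → w = w'

end CausalGraph

/-- The XOR (mod-2 sum) of the values of the parents of `x` under the assignment `pa`. -/
noncomputable def CausalGraph.xorPa {ν : Type} [Fintype ν] [DecidableEq ν]
    (G : CausalGraph ν) (x : ν) (pa : ν → ℕ) : ℕ :=
  (∑ p ∈ Finset.univ.filter (fun p => G.E p x), pa p) % 2


lemma sum_pin {ν : Type} [Fintype ν] [DecidableEq ν] (g : ν → Finset ℕ) (u : ν) (c : ℕ)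
    (F : (ν → ℕ) → ℝ) :
    ∑ w ∈ Fintype.piFinset g, F w =
      ∑ n ∈ g u, ∑ w ∈ Fintype.piFinset (Function.update g u {c}), F (Function.update w u n) := by
  rw [← Finset.sum_product']
  refine Finset.sum_nbij' (fun w => (w u, Function.update w u c))
    (fun p => Function.update p.2 u p.1) ?_ ?_ ?_ ?_ ?_
  · intro w hw
    rw [Fintype.mem_piFinset] at hw
    refine Finset.mem_product.mpr ⟨hw u, ?_⟩
    rw [Fintype.mem_piFinset]
    intro x
    by_cases hx : x = u
    · subst hx; simp
    · simp [Function.update_of_ne hx, hw x]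
  · intro p hp
    rw [Finset.mem_product, Fintype.mem_piFinset] at hp
    rw [Fintype.mem_piFinset]
    intro x
    by_cases hx : x = u
    · subst hx; simpa using hp.1
    · have := hp.2 x
      simpa [Function.update_of_ne hx] using this
  · intro w hw
    funext x
    by_cases hx : x = u
    · subst hx; simp
    · simp [Function.update_of_ne hx]
  · intro p hp
    rw [Finset.mem_product, Fintype.mem_piFinset] at hp
    have hpu : p.2 u = c := by simpa using hp.2 u
    ext x
    · simp
    · by_cases hx : x = u
      · subst hx; simp [hpu]
      · simp [Function.update_of_ne hx]
  · intro w hw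
    congr 1
    funext x
    by_cases hx : x = u
    · subst hx; simp
    · simp [Function.update_of_ne hx]

lemma g_update {ν : Type} [DecidableEq ν] (v : ν → ℕ) (W : Finset ν) (u : ν) :
    Function.update (fun x => if x ∈ W then ({0, 1} : Finset ℕ) else {v x}) u {v u}
      = fun x => if x ∈ W.erase u then ({0, 1} : Finset ℕ) else {v x} := by
  funext x
  by_cases hx : x = u
  · subst hx; simp
  · simp [Function.update_of_ne hx, Finset.mem_erase, hx]

lemma baseW {ν : Type} [Fintype ν] [DecidableEq ν] (v : ν → ℕ) (p : ν → ℕ → ℝ) :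
    ∀ W : Finset ν, (∀ u ∈ W, p u 0 + p u 1 = 1) →
      ∑ w ∈ Fintype.piFinset (fun x => if x ∈ W then ({0, 1} : Finset ℕ) else {v x}),
        ∏ u ∈ W, p u (w u) = 1 := by
  intro W
  induction W using Finset.induction_on with
  | empty =>
    intro _
    simp only [Finset.notMem_empty, if_false, Finset.prod_empty]
    rw [Finset.sum_const, Fintype.card_piFinset]
    simp
  | @insert a s ha ih =>
    intro hp
    rw [sum_pin _ a (v a), g_update, Finset.erase_insert ha]
    have hmem : (if a ∈ insert a s then ({0, 1} : Finset ℕ) else {v a}) = {0, 1} := by simp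
    rw [hmem]
    have hsummand : ∀ n, ∀ w ∈ Fintype.piFinset
        (fun x => if x ∈ s then ({0, 1} : Finset ℕ) else {v x}),
        ∏ u ∈ insert a s, p u (Function.update w a n u)
          = p a n * ∏ u ∈ s, p u (w u) := by
      intro n w _
      rw [Finset.prod_insert ha, Function.update_self]
      congr 1
      refine Finset.prod_congr rfl fun u hu => ?_
      rw [Function.update_of_ne (fun h : u = a => ha (h ▸ hu)) n w]
    calc ∑ n ∈ ({0,1} : Finset ℕ), ∑ w ∈ Fintype.piFinset
          (fun x => if x ∈ s then ({0, 1} : Finset ℕ) else {v x}),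
          ∏ u ∈ insert a s, p u (Function.update w a n u)
        = ∑ n ∈ ({0,1} : Finset ℕ), p a n * ∑ w ∈ Fintype.piFinset
          (fun x => if x ∈ s then ({0, 1} : Finset ℕ) else {v x}), ∏ u ∈ s, p u (w u) := by
          refine Finset.sum_congr rfl fun n _ => ?_
          rw [Finset.mul_sum]
          exact Finset.sum_congr rfl (hsummand n)
      _ = 1 := by
          rw [ih (fun u hu => hp u (Finset.mem_insert_of_mem hu))]
          rw [Finset.sum_pair (by norm_num : (0:ℕ) ≠ 1)]
          have := hp a (Finset.mem_insert_self a s)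
          simpa using this

lemma reach_cross {ν : Type} {r : ν → ν → Prop} {A : Set ν} {a b : ν}
    (h : Relation.ReflTransGen r a b) (ha : a ∈ A) (hb : b ∉ A) :
    ∃ x ∈ A, ∃ y, y ∉ A ∧ r x y := by
  induction h with
  | refl => exact absurd ha hb
  | tail h₁ h₂ ih =>
    rename_i c d
    by_cases hc : c ∈ A
    · exact ⟨c, hc, _, hb, h₂⟩
    · exact ih hc

section Key
variable {ν : Type} [Fintype ν] [DecidableEq ν]

lemma parent_unobs (G' : CausalGraph ν)
    (hnoDir : ∀ a b : ν, a ∈ G'.obs → b ∈ G'.obs → ¬ G'.E a b)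
    {p x : ν} (hx : x ∈ G'.obs) (hpx : G'.E p x) : p ∈ G'.unobs := by
  rcases Finset.mem_union.mp (G'.edge_mem p x hpx).1 with hp | hp
  · exact absurd hpx (hnoDir p x hp hx)
  · exact hp

/-- In any proper subset `A` of the observed vertices there is a vertex `a` with an
unobserved parent `u` whose other child lies outside `A`. -/
lemma exists_peel (G' : CausalGraph ν) (hconn : G'.SingleC G'.obs)
    {A : Finset ν} (hA : A.Nonempty) (hAobs : A ⊆ G'.obs) (hAne : A ≠ G'.obs) :
    ∃ a ∈ A, ∃ u ∈ G'.unobs, G'.E u a ∧ ∃ b, b ∉ A ∧ ∀ z, G'.E u z → z = a ∨ z = b := by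
  obtain ⟨a₀, ha₀⟩ := hA
  obtain ⟨b₀, hb₀obs, hb₀⟩ : ∃ b₀ ∈ G'.obs, b₀ ∉ A := by
    by_contra h
    push_neg at h
    exact hAne (Finset.Subset.antisymm hAobs h)
  have hpath := hconn.2 a₀ (hAobs ha₀) b₀ hb₀obs
  obtain ⟨x, hxA, y, hyA, hxy⟩ :=
    reach_cross (A := {z : ν | z ∈ A}) hpath ha₀ hb₀
  obtain ⟨hne, hxobs, hyobs, u, hu, hEx, hEy⟩ := hxy
  refine ⟨x, hxA, u, hu, hEx, y, hyA, ?_⟩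
  obtain ⟨c, d, hcd, _, _, hiff⟩ := G'.unobs_two_children u hu
  intro z hz
  rcases (hiff x).mp hEx with rfl | rfl <;> rcases (hiff y).mp hEy with h2 | h2 <;>
    rcases (hiff z).mp hz with rfl | rfl <;> tauto

lemma key (G' : CausalGraph ν)
    (hnoDir : ∀ a b : ν, a ∈ G'.obs → b ∈ G'.obs → ¬ G'.E a b)
    (hconn : G'.SingleC G'.obs)
    (ε : ℝ) (M : CausalGraph.SEM G') (c : ν → ℕ → ℕ)
    (hc0 : ∀ x, c x 0 ∈ ({0, 1} : Finset ℕ)) (hc1 : ∀ x, c x 1 ∈ ({0, 1} : Finset ℕ))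
    (hcne : ∀ x, c x 0 ≠ c x 1)
    (hU : ∀ u ∈ G'.unobs, ∀ n ∈ ({0, 1} : Finset ℕ), M.pU u n = 1/2)
    (hO : ∀ x ∈ G'.obs, ∀ n ∈ ({0, 1} : Finset ℕ), ∀ pa : ν → ℕ,
      (∀ p, G'.E p x → pa p ∈ ({0, 1} : Finset ℕ)) →
      M.pO x n pa = (1 - ε) * (if n = c x (G'.xorPa x pa) then 1 else 0) + ε/2)
    (v : ν → ℕ)
    (hv : ∀ x, v x ∈ (if x ∈ G'.obs then ({0, 1} : Finset ℕ) else ({0} : Finset ℕ))) :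
    ∀ A : Finset ν, A ⊆ G'.obs → A ≠ G'.obs →
    ∀ W : Finset ν, W ⊆ G'.unobs →
      (∀ u ∈ G'.unobs, u ∉ W → ∀ x ∈ A, ¬ G'.E u x) →
      ∑ w ∈ Fintype.piFinset (fun x => if x ∈ W then ({0, 1} : Finset ℕ) else {v x}),
        (∏ x ∈ A, M.pO x (v x) w) * ∏ u ∈ W, M.pU u (w u) = (2:ℝ)⁻¹ ^ A.card := by
  intro A
  induction A using Finset.strongInduction with
  | _ A ih =>
    intro hAobs hAne W hW hinv
    rcases A.eq_empty_or_nonempty with rfl | hA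
    · simp only [Finset.prod_empty, one_mul, Finset.card_empty, pow_zero]
      exact baseW v M.pU W (fun u hu => by
        have h0 := hU u (hW hu) 0 (by simp)
        have h1 := hU u (hW hu) 1 (by simp)
        rw [h0, h1]; norm_num)
    · obtain ⟨a, haA, u, hu, hEua, b, hbA, hz⟩ := exists_peel G' hconn hA hAobs hAne
      have haobs : a ∈ G'.obs := hAobs haA
      have huW : u ∈ W := by
        by_contra huW
        exact hinv u hu huW a haA hEua
      -- peel the coordinate u
      rw [sum_pin _ u (v u), g_update]
      have hmemW : (if u ∈ W then ({0, 1} : Finset ℕ) else {v u}) = {0, 1} := by simp [huW]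
      rw [hmemW, Finset.sum_comm]
      -- rewrite each inner sum
      have hstep : ∀ w ∈ Fintype.piFinset
          (fun x => if x ∈ W.erase u then ({0, 1} : Finset ℕ) else {v x}),
          ∑ n ∈ ({0, 1} : Finset ℕ),
            (∏ x ∈ A, M.pO x (v x) (Function.update w u n)) *
              ∏ u' ∈ W, M.pU u' (Function.update w u n u')
          = (2:ℝ)⁻¹ * ((∏ x ∈ A.erase a, M.pO x (v x) w) *
              ∏ u' ∈ W.erase u, M.pU u' (w u')) := by
        intro w hw
        rw [Fintype.mem_piFinset] at hw
        have hwmem : ∀ p, p ≠ u → p ∈ G'.unobs → w p ∈ ({0, 1} : Finset ℕ) := by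
          intro p hpu hpunobs
          have := hw p
          by_cases hpW : p ∈ W.erase u
          · simpa [hpW] using this
          · rw [if_neg hpW] at this
            have : w p = v p := by simpa using this
            rw [this]
            have hvp := hv p
            have : p ∉ G'.obs := Finset.disjoint_right.mp G'.disj hpunobs
            rw [if_neg this] at hvp
            simp only [Finset.mem_singleton] at hvp
            simp [hvp]
        have hterm : ∀ n ∈ ({0, 1} : Finset ℕ),
            (∏ x ∈ A, M.pO x (v x) (Function.update w u n)) *
              ∏ u' ∈ W, M.pU u' (Function.update w u n u')
            = (M.pO a (v a) (Function.update w u n) * M.pU u n) *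
              ((∏ x ∈ A.erase a, M.pO x (v x) w) *
                ∏ u' ∈ W.erase u, M.pU u' (w u')) := by
          intro n hn
          rw [← Finset.mul_prod_erase A _ haA, ← Finset.mul_prod_erase W _ huW,
            Function.update_self]
          have h1 : ∏ x ∈ A.erase a, M.pO x (v x) (Function.update w u n)
              = ∏ x ∈ A.erase a, M.pO x (v x) w := by
            refine Finset.prod_congr rfl fun x hx => ?_
            refine M.pO_par x (v x) _ _ fun p hp => ?_
            have hpu : p ≠ u := by
              rintro rfl
              rcases hz x hp with rfl | rfl
              · exact (Finset.mem_erase.mp hx).1 rfl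
              · exact hbA (Finset.mem_of_mem_erase hx)
            exact Function.update_of_ne hpu _ _
          have h2 : ∏ u' ∈ W.erase u, M.pU u' (Function.update w u n u')
              = ∏ u' ∈ W.erase u, M.pU u' (w u') := by
            refine Finset.prod_congr rfl fun u' hu' => ?_
            rw [Function.update_of_ne (Finset.mem_erase.mp hu').1]
          rw [h1, h2]; ring
        rw [Finset.sum_congr rfl hterm, ← Finset.sum_mul]
        congr 1
        -- the crucial computation: ∑ n, pO a (v a) (update w u n) * pU u n = 1/2
        have hpa : ∀ n ∈ ({0, 1} : Finset ℕ), ∀ p, G'.E p a →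
            Function.update w u n p ∈ ({0, 1} : Finset ℕ) := by
          intro n hn p hp
          by_cases hpu : p = u
          · subst hpu; simpa using hn
          · rw [Function.update_of_ne hpu]
            exact hwmem p hpu (parent_unobs G' hnoDir haobs hp)
        have hva : v a ∈ ({0, 1} : Finset ℕ) := by
          have := hv a; rwa [if_pos haobs] at this
        have hxor : ∀ n, G'.xorPa a (Function.update w u n)
            = (n + ∑ p ∈ (Finset.univ.filter (fun p => G'.E p a)).erase u, w p) % 2 := by
          intro n
          unfold CausalGraph.xorPa
          have huf : u ∈ Finset.univ.filter (fun p => G'.E p a) := by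
            simp [hEua]
          rw [← Finset.add_sum_erase _ _ huf, Function.update_self]
          congr 2
          refine Finset.sum_congr rfl fun p hp => ?_
          exact Function.update_of_ne (Finset.mem_erase.mp hp).1 _ _
        have hrw : ∀ n ∈ ({0, 1} : Finset ℕ),
            M.pO a (v a) (Function.update w u n) * M.pU u n
            = ((1 - ε) * (if v a = c a (G'.xorPa a (Function.update w u n)) then 1 else 0)
                + ε/2) * (1/2) := by
          intro n hn
          rw [hO a haobs (v a) hva _ (hpa n hn), hU u (hW huW) n hn]
        rw [Finset.sum_congr rfl hrw, Finset.sum_pair (by norm_num : (0:ℕ) ≠ 1),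
          hxor 0, hxor 1]
        set s := ∑ p ∈ (Finset.univ.filter (fun p => G'.E p a)).erase u, w p with hs
        have h01 : ((0 + s) % 2 = 0 ∧ (1 + s) % 2 = 1) ∨ ((0 + s) % 2 = 1 ∧ (1 + s) % 2 = 0) := by
          omega
        have hmem2 : ∀ m : ℕ, m ∈ ({0, 1} : Finset ℕ) → m = 0 ∨ m = 1 := by
          intro m hm; simpa using hm
        have hcc := hcne a
        have hind : (if v a = c a ((0 + s) % 2) then (1:ℝ) else 0)
            + (if v a = c a ((1 + s) % 2) then 1 else 0) = 1 := by
          rcases hmem2 _ hva with hva' | hva' <;>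
            rcases hmem2 _ (hc0 a) with h0' | h0' <;>
            rcases hmem2 _ (hc1 a) with h1' | h1' <;>
            rcases h01 with ⟨e0, e1⟩ | ⟨e0, e1⟩ <;>
            rw [e0, e1] <;>
            split_ifs <;>
            first
              | (exfalso; omega)
              | norm_num
        linear_combination ((1 - ε)/2) * hind
      rw [Finset.sum_congr rfl hstep, ← Finset.mul_sum]
      rw [ih (A.erase a) (Finset.erase_ssubset haA)
        (Finset.Subset.trans (Finset.erase_subset _ _) hAobs)
        (by
          intro h
          have : a ∈ A.erase a := h ▸ haobs
          exact (Finset.mem_erase.mp this).1 rfl)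
        (W.erase u) (Finset.Subset.trans (Finset.erase_subset _ _) hW)
        (by
          intro u' hu' hu'W x hx hE
          by_cases h : u' = u
          · subst h
            rcases hz x hE with rfl | rfl
            · exact (Finset.mem_erase.mp hx).1 rfl
            · exact hbA (Finset.mem_of_mem_erase hx)
          · exact hinv u' hu' (fun hmem => hu'W (Finset.mem_erase.mpr ⟨h, hmem⟩)) x
              (Finset.mem_of_mem_erase hx) hE)]
      rw [Finset.card_erase_of_mem haA, ← pow_succ']
      have hpos : 1 ≤ A.card := Finset.card_pos.mpr hA
      congr 1
      omega

end Key

lemma Qform {ν : Type} [Fintype ν] [DecidableEq ν] (G' : CausalGraph ν)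
    (M : CausalGraph.SEM G') (hdom : ∀ i ∈ G'.verts, M.dom i = {0, 1})
    (v : ν → ℕ)
    (hv : ∀ x, v x ∈ (if x ∈ G'.obs then ({0, 1} : Finset ℕ) else ({0} : Finset ℕ)))
    (A : Finset ν) (hAobs : A ⊆ G'.obs) :
    M.Q A v = ∑ w ∈ Fintype.piFinset
        (fun x => if x ∈ G'.unobs then ({0, 1} : Finset ℕ) else {v x}),
      (∏ x ∈ A, M.pO x (v x) w) * ∏ u ∈ G'.unobs, M.pU u (w u) := by
  have hver : ∀ x, x ∈ G'.verts ↔ x ∈ G'.obs ∨ x ∈ G'.unobs := fun x => by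
    unfold CausalGraph.verts; exact Finset.mem_union
  have hset : M.fullAssign.filter (fun w => ∀ x ∈ G'.obs, w x = v x)
      = Fintype.piFinset (fun x => if x ∈ G'.unobs then ({0, 1} : Finset ℕ) else {v x}) := by
    ext w
    rw [Finset.mem_filter, Fintype.mem_piFinset]
    unfold CausalGraph.SEM.fullAssign
    rw [Fintype.mem_piFinset]
    constructor
    · rintro ⟨hw, heq⟩ x
      by_cases hxo : x ∈ G'.obs
      · have hxu : x ∉ G'.unobs := Finset.disjoint_left.mp G'.disj hxo
        rw [if_neg hxu]
        simp [heq x hxo]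
      · by_cases hxu : x ∈ G'.unobs
        · have := hw x
          rw [if_pos ((hver x).mpr (Or.inr hxu)), hdom x
            ((hver x).mpr (Or.inr hxu))] at this
          rw [if_pos hxu]
          exact this
        · have hxv : x ∉ G'.verts := by
            intro h
            rcases (hver x).mp h with h | h
            exacts [hxo h, hxu h]
          have := hw x
          rw [if_neg hxv] at this
          rw [if_neg hxu]
          have hvx := hv x
          rw [if_neg hxo] at hvx
          simp only [Finset.mem_singleton] at this hvx ⊢
          rw [this, hvx]
    · intro hw
      constructor
      · intro x
        by_cases hxo : x ∈ G'.obs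
        · have hxu : x ∉ G'.unobs := Finset.disjoint_left.mp G'.disj hxo
          have h1 := hw x
          rw [if_neg hxu, Finset.mem_singleton] at h1
          rw [if_pos ((hver x).mpr (Or.inl hxo)), hdom x
            ((hver x).mpr (Or.inl hxo)), h1]
          have := hv x
          rwa [if_pos hxo] at this
        · by_cases hxu : x ∈ G'.unobs
          · have h1 := hw x
            rw [if_pos hxu] at h1
            rw [if_pos ((hver x).mpr (Or.inr hxu)), hdom x
              ((hver x).mpr (Or.inr hxu))]
            exact h1
          · have hxv : x ∉ G'.verts := by
              intro h
              rcases (hver x).mp h with h | h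
              exacts [hxo h, hxu h]
            have h1 := hw x
            rw [if_neg hxu, Finset.mem_singleton] at h1
            have hvx := hv x
            rw [if_neg hxo, Finset.mem_singleton] at hvx
            rw [if_neg hxv, Finset.mem_singleton, h1, hvx]
      · intro x hxo
        have hxu : x ∉ G'.unobs := Finset.disjoint_left.mp G'.disj hxo
        have h1 := hw x
        rw [if_neg hxu, Finset.mem_singleton] at h1
        exact h1
  unfold CausalGraph.SEM.Q
  rw [hset]
  refine Finset.sum_congr rfl fun w hw => ?_
  rw [Fintype.mem_piFinset] at hw
  congr 1
  refine Finset.prod_congr rfl fun x hx => ?_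
  have hxo : x ∈ G'.obs := hAobs hx
  have hxu : x ∉ G'.unobs := Finset.disjoint_left.mp G'.disj hxo
  have h1 := hw x
  rw [if_neg hxu, Finset.mem_singleton] at h1
  rw [h1]


/-- Appendix D, first lemma. In the two XOR-type models `M₁`, `M₂`
on a graph whose bidirected edges form a spanning tree of `V'` and which has no
directed edges between observed variables, `Q^{M₁}[A](v) = Q^{M₂}[A](v) = 1/2^{|A|}`
for every strict subset `A ⊊ V'` and every realization `v`. -/
theorem Q_eq_half_pow_of_strict_subset
    {ν : Type} [Fintype ν] [DecidableEq ν] (G' : CausalGraph ν)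
    (hnoDir : ∀ a b : ν, a ∈ G'.obs → b ∈ G'.obs → ¬ G'.E a b)
    (hconn : G'.SingleC G'.obs) (htree : G'.unobs.card = G'.obs.card - 1)
    (ε : ℝ) (hε0 : 0 < ε) (hε1 : ε < 1)
    (V₁ : ν) (hV₁ : V₁ ∈ G'.obs)
    (M₁ M₂ : CausalGraph.SEM G')
    (hdom1 : ∀ i ∈ G'.verts, M₁.dom i = {0, 1})
    (hdom2 : ∀ i ∈ G'.verts, M₂.dom i = {0, 1})
    (hU1 : ∀ u ∈ G'.unobs, ∀ n ∈ ({0, 1} : Finset ℕ), M₁.pU u n = 1/2)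
    (hU2 : ∀ u ∈ G'.unobs, ∀ n ∈ ({0, 1} : Finset ℕ), M₂.pU u n = 1/2)
    (hO1 : ∀ x ∈ G'.obs, ∀ n ∈ ({0, 1} : Finset ℕ), ∀ pa : ν → ℕ,
      (∀ p, G'.E p x → pa p ∈ ({0, 1} : Finset ℕ)) →
      M₁.pO x n pa = (1 - ε) * (if n = G'.xorPa x pa then 1 else 0) + ε/2)
    (hO2 : ∀ x ∈ G'.obs, x ≠ V₁ → ∀ n ∈ ({0, 1} : Finset ℕ), ∀ pa : ν → ℕ,
      (∀ p, G'.E p x → pa p ∈ ({0, 1} : Finset ℕ)) →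
      M₂.pO x n pa = (1 - ε) * (if n = G'.xorPa x pa then 1 else 0) + ε/2)
    (hO2V : ∀ n ∈ ({0, 1} : Finset ℕ), ∀ pa : ν → ℕ,
      (∀ p, G'.E p V₁ → pa p ∈ ({0, 1} : Finset ℕ)) →
      M₂.pO V₁ n pa = (1 - ε) * (if n = 1 - G'.xorPa V₁ pa then 1 else 0) + ε/2) :
    ∀ A : Finset ν, A ⊂ G'.obs → ∀ v ∈ M₁.obsAssign,
      M₁.Q A v = 1 / 2 ^ A.card ∧ M₂.Q A v = 1 / 2 ^ A.card := by
  intro A hA v hvmem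
  have hAobs : A ⊆ G'.obs := hA.subset
  have hAne : A ≠ G'.obs := hA.ne
  have hv : ∀ x, v x ∈ (if x ∈ G'.obs then ({0, 1} : Finset ℕ) else ({0} : Finset ℕ)) := by
    intro x
    unfold CausalGraph.SEM.obsAssign at hvmem
    rw [Fintype.mem_piFinset] at hvmem
    have := hvmem x
    by_cases hxo : x ∈ G'.obs
    · rw [if_pos hxo] at this ⊢
      rwa [hdom1 x (by unfold CausalGraph.verts; exact Finset.mem_union.mpr (Or.inl hxo))] at this
    · rw [if_neg hxo] at this ⊢
      exact this
  have hinv : ∀ u ∈ G'.unobs, u ∉ G'.unobs → ∀ x ∈ A, ¬ G'.E u x :=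
    fun u hu hu' => absurd hu hu'
  have hgoal : (1 : ℝ) / 2 ^ A.card = (2:ℝ)⁻¹ ^ A.card := by
    rw [one_div, inv_pow]
  constructor
  · rw [Qform G' M₁ hdom1 v hv A hAobs, hgoal]
    exact key G' hnoDir hconn ε M₁ (fun _ n => n) (fun _ => by simp) (fun _ => by simp)
      (fun _ => by norm_num) hU1 hO1 v hv A hAobs hAne G'.unobs Finset.Subset.rfl hinv
  · rw [Qform G' M₂ hdom2 v hv A hAobs, hgoal]
    refine key G' hnoDir hconn ε M₂ (fun x n => if x = V₁ then 1 - n else n)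
      ?_ ?_ ?_ hU2 ?_ v hv A hAobs hAne G'.unobs Finset.Subset.rfl hinv
    · intro x; by_cases h : x = V₁ <;> simp [h]
    · intro x; by_cases h : x = V₁ <;> simp [h]
    · intro x; by_cases h : x = V₁ <;> simp [h]
    · intro x hx n hn pa hpa
      by_cases hxV : x = V₁
      · subst hxV
        rw [hO2V n hn pa hpa]
        simp
      · rw [hO2 x hx hxV n hn pa hpa]
        simp [hxV]
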